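/- arXiv:1009.3619 — 6 statements merged into one kernel-verified Lean document; each statement's English description precedes it below -/
import Mathlib

section
/- Let G be an undirected graph with vertex set V, and let k be a positive integer. There exists a contagious set A ⊆ V (i.e., a set such that iteratively activating every vertex with at least k already-active neighbors eventually activates all of V) with |A| ≤ Σ_{v∈V} min(1, k/(d(v)+1)), where d(v) is the degree of v. -/
/-- A set `T` is closed under the threshold-`k` activation rule: every vertex with at
least `k` neighbors in `T` belongs to `T`. -/
def ClosedUnder {V : Type*} (G : SimpleGraph V) (k : ℕ) (T : Set V) : Prop :=
  ∀ v : V, k ≤ {u : V | G.Adj v u ∧ u ∈ T}.ncard → v ∈ T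

/-- `A` is contagious with threshold `k`: the activation process starting from `A`
(equivalently, the least `ClosedUnder`-closed superset of `A`) activates every vertex. -/
def Contagious {V : Type*} (G : SimpleGraph V) (k : ℕ) (A : Set V) : Prop :=
  ∀ T : Set V, A ⊆ T → ClosedUnder G k T → ∀ v : V, v ∈ T

/-!
Generalise to an arbitrary vertex set `S` with a threshold `t v` for each vertex, and bound the
seed set by `∑ v ∈ S, min 1 (t v / (d_S v + 1))`, inducting on `S`. If some vertex has threshold
above its degree, seed it and delete it, lowering the thresholds of its neighbors by one: this
costs `1`, its own weight, and no other weight grows. Otherwise every vertex is activated once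
all its neighbors are, so any vertex can be deleted unseeded; this raises the weight of each
neighbor `u` by at most `t u / (d u (d u + 1))`, and double counting shows that for some vertex
`v` these raises sum to at most `t v / (d v + 1)`, its own weight.
-/

open Finset

noncomputable def thresholdWeight (t d : ℕ) : ℝ := min 1 ((t : ℝ) / (d + 1))

/-- `thresholdExcess t (d + 1)` bounds the growth of `thresholdWeight t d` when the degree drops
from `d + 1` to `d`, and `d` such charges total at most `t / (d + 1)`. -/
noncomputable def thresholdExcess (t d : ℕ) : ℝ := (t : ℝ) / (d * (d + 1))

lemma thresholdWeight_eq_one_of_lt {t d : ℕ} (h : d < t) : thresholdWeight t d = 1 := by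
  have : ((d : ℝ) + 1) ≤ t := by exact_mod_cast h
  exact min_eq_left ((one_le_div (by positivity)).mpr this)

lemma thresholdWeight_eq_div_of_le {t d : ℕ} (h : t ≤ d + 1) :
    thresholdWeight t d = (t : ℝ) / (d + 1) := by
  have : (t : ℝ) ≤ d + 1 := by exact_mod_cast h
  exact min_eq_right ((div_le_one (by positivity)).mpr this)

lemma thresholdWeight_pred_le_succ (t d : ℕ) :
    thresholdWeight (t - 1) d ≤ thresholdWeight t (d + 1) := by
  rcases Nat.lt_or_ge (d + 1) t with h | h
  · rw [thresholdWeight_eq_one_of_lt (by omega : d + 1 < t)]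
    exact min_le_left _ _
  · rw [thresholdWeight_eq_div_of_le (by omega), thresholdWeight_eq_div_of_le (by omega)]
    rcases Nat.eq_zero_or_pos t with rfl | ht
    · simp
    have : (t : ℝ) ≤ d + 1 := by exact_mod_cast h
    rw [Nat.cast_sub ht, div_le_div_iff₀ (by positivity) (by positivity)]
    push_cast
    nlinarith

lemma thresholdWeight_le_succ_add_thresholdExcess {t d : ℕ} (h : t ≤ d + 2) :
    thresholdWeight t d ≤ thresholdWeight t (d + 1) + thresholdExcess t (d + 1) := by
  rw [thresholdWeight_eq_div_of_le h, thresholdExcess]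
  calc thresholdWeight t d ≤ (t : ℝ) / (d + 1) := min_le_right _ _
    _ = (t : ℝ) / ((d + 1 : ℕ) + 1) + (t : ℝ) / ((d + 1 : ℕ) * ((d + 1 : ℕ) + 1)) := by
      push_cast
      field_simp

lemma mul_thresholdExcess_le (t d : ℕ) : d * thresholdExcess t d ≤ (t : ℝ) / (d + 1) := by
  rcases Nat.eq_zero_or_pos d with rfl | hd
  · simp only [CharP.cast_eq_zero, zero_mul]
    positivity
  · have : (d : ℝ) ≠ 0 := by positivity
    rw [thresholdExcess, mul_div_assoc', mul_div_mul_left _ _ this]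

namespace SimpleGraph

variable {V : Type*} (G : SimpleGraph V)

def activeNeighbors (S : Finset V) (T : Set V) (v : V) : Set V :=
  {u | u ∈ S ∧ G.Adj v u ∧ u ∈ T}

def ClosedOn (S : Finset V) (t : V → ℕ) (T : Set V) : Prop :=
  ∀ v ∈ S, t v ≤ (G.activeNeighbors S T v).ncard → v ∈ T

def ContagiousOn (S : Finset V) (t : V → ℕ) (A : Set V) : Prop :=
  ∀ T : Set V, A ⊆ T → G.ClosedOn S t T → ↑S ⊆ T

variable {G}

lemma ContagiousOn.contagious [Fintype V] {k : ℕ} {A : Set V}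
    (hA : G.ContagiousOn univ (fun _ => k) A) : Contagious G k A := by
  refine fun T hAT hT v => hA T hAT (fun u _ hu => hT u ?_) (mem_univ v)
  simpa [activeNeighbors] using hu

lemma activeNeighbors_finite (S : Finset V) (T : Set V) (v : V) :
    (G.activeNeighbors S T v).Finite :=
  S.finite_toSet.subset fun _ hu => hu.1

lemma ncard_activeNeighbors_mono {S S' : Finset V} (h : S' ⊆ S) (T : Set V) (v : V) :
    (G.activeNeighbors S' T v).ncard ≤ (G.activeNeighbors S T v).ncard :=
  Set.ncard_le_ncard (fun _ hu => ⟨h hu.1, hu.2⟩) (activeNeighbors_finite S T v)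

lemma ClosedOn.mono {S S' : Finset V} {t : V → ℕ} {T : Set V} (hT : G.ClosedOn S t T)
    (h : S' ⊆ S) : G.ClosedOn S' t T :=
  fun v hv hcount => hT v (h hv) (hcount.trans (ncard_activeNeighbors_mono h T v))

variable [DecidableRel G.Adj]

variable (G) in
def degreeIn (S : Finset V) (v : V) : ℕ := #{u ∈ S | G.Adj v u}

variable (G) in
/-- The thresholds left once `v` is active: each neighbor of `v` needs one active neighbor less. -/
def decNeighbors (v : V) (t : V → ℕ) (u : V) : ℕ := if G.Adj v u then t u - 1 else t u

variable (G) in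
noncomputable def thresholdBound (S : Finset V) (t : V → ℕ) : ℝ :=
  ∑ v ∈ S, thresholdWeight (t v) (G.degreeIn S v)

lemma ncard_activeNeighbors_eq_degreeIn {S : Finset V} {T : Set V} {v : V}
    (hS : ∀ u ∈ S, G.Adj v u → u ∈ T) :
    (G.activeNeighbors S T v).ncard = G.degreeIn S v := by
  rw [degreeIn, ← Set.ncard_coe_finset]
  congr 1
  ext u
  simp only [activeNeighbors, coe_filter, Set.mem_ofPred_eq]
  exact ⟨fun h => ⟨h.1, h.2.1⟩, fun h => ⟨h.1, h.2, hS u h.1 h.2⟩⟩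

lemma sum_sum_adj_eq_sum_degreeIn_mul (S : Finset V) (g : V → ℝ) :
    ∑ v ∈ S, ∑ u ∈ S with G.Adj v u, g u = ∑ u ∈ S, (G.degreeIn S u : ℝ) * g u := by
  simp only [sum_filter]
  rw [sum_comm]
  refine sum_congr rfl fun u _ => ?_
  rw [← sum_filter, sum_const, nsmul_eq_mul, degreeIn]
  simp only [G.adj_comm]

lemma exists_sum_thresholdExcess_le {S : Finset V} (hS : S.Nonempty) (t : V → ℕ) :
    ∃ v ∈ S, ∑ u ∈ S with G.Adj v u, thresholdExcess (t u) (G.degreeIn S u)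
      ≤ (t v : ℝ) / (G.degreeIn S v + 1) := by
  refine exists_le_of_sum_le hS ?_
  rw [sum_sum_adj_eq_sum_degreeIn_mul]
  exact sum_le_sum fun u _ => mul_thresholdExcess_le _ _

lemma degreeIn_univ [Fintype V] (v : V) : G.degreeIn univ v = G.degree v := by
  rw [degreeIn, ← neighborFinset_eq_filter, card_neighborFinset_eq_degree]

lemma thresholdBound_univ [Fintype V] (t : V → ℕ) :
    G.thresholdBound univ t = ∑ v, thresholdWeight (t v) (G.degree v) := by
  simp only [thresholdBound, degreeIn_univ]

variable [DecidableEq V]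

lemma degreeIn_erase_of_adj {S : Finset V} {u v : V} (hv : v ∈ S) (h : G.Adj u v) :
    G.degreeIn S u = G.degreeIn (S.erase v) u + 1 := by
  rw [degreeIn, degreeIn, filter_erase, card_erase_add_one (mem_filter.mpr ⟨hv, h⟩)]

lemma degreeIn_erase_of_not_adj {S : Finset V} {u v : V} (h : ¬G.Adj u v) :
    G.degreeIn (S.erase v) u = G.degreeIn S u := by
  rw [degreeIn, degreeIn, filter_erase, erase_eq_of_notMem fun hv => h (mem_filter.mp hv).2]

omit [DecidableRel G.Adj] in
lemma ncard_activeNeighbors_erase {S : Finset V} {T : Set V} {u v : V} (hv : v ∈ S)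
    (hvT : v ∈ T) (h : G.Adj u v) :
    (G.activeNeighbors (S.erase v) T u).ncard + 1 = (G.activeNeighbors S T u).ncard := by
  have : G.activeNeighbors S T u = insert v (G.activeNeighbors (S.erase v) T u) := by
    ext w
    by_cases hw : w = v
    · subst hw
      simp [activeNeighbors, hv, h, hvT]
    · simp [activeNeighbors, hw]
  rw [this, Set.ncard_insert_of_notMem (fun h => notMem_erase v S h.1)
    (activeNeighbors_finite _ _ _)]

lemma ClosedOn.erase_decNeighbors {S : Finset V} {t : V → ℕ} {T : Set V} {v : V}
    (hT : G.ClosedOn S t T) (hv : v ∈ S) (hvT : v ∈ T) :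
    G.ClosedOn (S.erase v) (G.decNeighbors v t) T := by
  intro u hu hcount
  refine hT u (mem_of_mem_erase hu) ?_
  by_cases hadj : G.Adj v u
  · have := ncard_activeNeighbors_erase hv hvT hadj.symm
    simp only [decNeighbors, hadj, if_true] at hcount
    omega
  · simp only [decNeighbors, hadj, if_false] at hcount
    exact hcount.trans (ncard_activeNeighbors_mono (erase_subset v S) T u)

omit [DecidableRel G.Adj] in
lemma coe_subset_of_erase {S : Finset V} {T : Set V} {v : V} (hS : ↑(S.erase v) ⊆ T)
    (hvT : v ∈ T) : ↑S ⊆ T := by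
  intro u hu
  by_cases huv : u = v
  · exact huv ▸ hvT
  · exact hS (mem_erase.mpr ⟨huv, hu⟩)

lemma ContagiousOn.insert_of_erase {S : Finset V} {t : V → ℕ} {A : Set V} {v : V}
    (hA : G.ContagiousOn (S.erase v) (G.decNeighbors v t) A) (hv : v ∈ S) :
    G.ContagiousOn S t (insert v A) := by
  intro T hAT hT
  have hvT : v ∈ T := hAT (Set.mem_insert v A)
  exact coe_subset_of_erase
    (hA T ((Set.subset_insert v A).trans hAT) (hT.erase_decNeighbors hv hvT)) hvT

lemma ContagiousOn.of_erase {S : Finset V} {t : V → ℕ} {A : Set V} {v : V}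
    (hA : G.ContagiousOn (S.erase v) t A) (hv : v ∈ S) (hle : t v ≤ G.degreeIn S v) :
    G.ContagiousOn S t A := by
  intro T hAT hT
  have hS : ↑(S.erase v) ⊆ T := hA T hAT (hT.mono (erase_subset v S))
  have hneighbors : ∀ u ∈ S, G.Adj v u → u ∈ T :=
    fun u hu hadj => hS (mem_erase.mpr ⟨hadj.ne', hu⟩)
  exact coe_subset_of_erase hS
    (hT v hv (hle.trans_eq (ncard_activeNeighbors_eq_degreeIn hneighbors).symm))

lemma thresholdBound_erase_decNeighbors_add_le {S : Finset V} {v : V} (hv : v ∈ S)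
    (t : V → ℕ) :
    G.thresholdBound (S.erase v) (G.decNeighbors v t) + thresholdWeight (t v) (G.degreeIn S v)
      ≤ G.thresholdBound S t := by
  rw [thresholdBound, thresholdBound, ← sum_erase_add S _ hv]
  gcongr with u
  by_cases hadj : G.Adj v u
  · rw [decNeighbors, if_pos hadj, degreeIn_erase_of_adj hv hadj.symm]
    exact thresholdWeight_pred_le_succ _ _
  · rw [decNeighbors, if_neg hadj, degreeIn_erase_of_not_adj fun h => hadj h.symm]

lemma thresholdBound_erase_le {S : Finset V} {t : V → ℕ} {v : V} (hv : v ∈ S)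
    (ht : ∀ u ∈ S, t u ≤ G.degreeIn S u)
    (hexcess : ∑ u ∈ S with G.Adj v u, thresholdExcess (t u) (G.degreeIn S u)
      ≤ (t v : ℝ) / (G.degreeIn S v + 1)) :
    G.thresholdBound (S.erase v) t ≤ G.thresholdBound S t := by
  have hneighbor : ∀ u ∈ S.erase v, thresholdWeight (t u) (G.degreeIn (S.erase v) u)
      ≤ thresholdWeight (t u) (G.degreeIn S u)
        + if G.Adj v u then thresholdExcess (t u) (G.degreeIn S u) else 0 := by
    intro u hu
    by_cases hadj : G.Adj v u
    · have hdeg := degreeIn_erase_of_adj hv hadj.symm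
      have htu := ht u (mem_of_mem_erase hu)
      rw [if_pos hadj, hdeg]
      exact thresholdWeight_le_succ_add_thresholdExcess (by omega)
    · rw [if_neg hadj, add_zero, degreeIn_erase_of_not_adj fun h => hadj h.symm]
  have hsum_excess :
      ∑ u ∈ S.erase v, (if G.Adj v u then thresholdExcess (t u) (G.degreeIn S u) else 0)
        = ∑ u ∈ S with G.Adj v u, thresholdExcess (t u) (G.degreeIn S u) := by
    rw [sum_filter]
    exact sum_erase S (if_neg (G.irrefl (v := v)))
  calc G.thresholdBound (S.erase v) t
      ≤ ∑ u ∈ S.erase v, thresholdWeight (t u) (G.degreeIn S u)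
          + ∑ u ∈ S with G.Adj v u, thresholdExcess (t u) (G.degreeIn S u) := by
        rw [thresholdBound, ← hsum_excess, ← sum_add_distrib]
        exact sum_le_sum hneighbor
    _ ≤ ∑ u ∈ S.erase v, thresholdWeight (t u) (G.degreeIn S u)
          + thresholdWeight (t v) (G.degreeIn S v) := by
        rw [thresholdWeight_eq_div_of_le ((ht v hv).trans (Nat.le_succ _))]
        gcongr
    _ = G.thresholdBound S t := sum_erase_add S _ hv

theorem exists_contagiousOn_card_le (S : Finset V) (t : V → ℕ) :
    ∃ A : Finset V, G.ContagiousOn S t ↑A ∧ (#A : ℝ) ≤ G.thresholdBound S t := by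
  induction S using Finset.strongInduction generalizing t with
  | H S ih =>
  rcases S.eq_empty_or_nonempty with rfl | hS
  · exact ⟨∅, fun _ _ _ => by simp, by simp [thresholdBound]⟩
  by_cases hover : ∃ v ∈ S, G.degreeIn S v < t v
  · obtain ⟨v, hv, hlt⟩ := hover
    obtain ⟨A, hA, hcard⟩ := ih _ (erase_ssubset hv) (G.decNeighbors v t)
    refine ⟨insert v A, by simpa using hA.insert_of_erase hv, ?_⟩
    calc (#(insert v A) : ℝ) ≤ #A + thresholdWeight (t v) (G.degreeIn S v) := by
          rw [thresholdWeight_eq_one_of_lt hlt]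
          exact_mod_cast card_insert_le v A
      _ ≤ G.thresholdBound S t :=
          (add_le_add_left hcard _).trans (thresholdBound_erase_decNeighbors_add_le hv t)
  · push Not at hover
    obtain ⟨v, hv, hexcess⟩ := exists_sum_thresholdExcess_le (G := G) hS t
    obtain ⟨A, hA, hcard⟩ := ih _ (erase_ssubset hv) t
    exact ⟨A, hA.of_erase hv (hover v hv),
      hcard.trans (thresholdBound_erase_le hv hover hexcess)⟩

end SimpleGraph

theorem stmt_0_general {V : Type*} [Fintype V] (G : SimpleGraph V)
    [DecidableRel G.Adj] (k : ℕ) :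
    ∃ A : Finset V, Contagious G k ↑A ∧
      (A.card : ℝ) ≤ ∑ v : V, min 1 ((k : ℝ) / (G.degree v + 1)) := by
  classical
  obtain ⟨A, hA, hcard⟩ := G.exists_contagiousOn_card_le univ fun _ => k
  exact ⟨A, hA.contagious, hcard.trans_eq (G.thresholdBound_univ _)⟩

theorem stmt_0 {V : Type*} [Fintype V] [DecidableEq V] (G : SimpleGraph V)
    [DecidableRel G.Adj] (k : ℕ) (hk : 0 < k) :
    ∃ A : Finset V, Contagious G k ↑A ∧
      (A.card : ℝ) ≤ ∑ v : V, min 1 ((k : ℝ) / (G.degree v + 1)) :=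
  stmt_0_general G k
end

section
/- Let G be an undirected graph and k a positive integer. If repeatedly deleting, from G, a vertex of current degree at least k until no such vertex remains leaves a vertex set I, then I is a contagious set for G with threshold k. -/
theorem stmt_2 {V : Type*} [Fintype V] [DecidableEq V] (G : SimpleGraph V) (k : ℕ)
    (hk : 0 < k) (l : List V) (hnd : l.Nodup)
    (hdeg : ∀ (j : ℕ) (hj : j < l.length),
      k ≤ {u : V | G.Adj (l[j]'hj) u ∧ u ∉ l.take j}.ncard)
    (hterm : ∀ v : V, v ∉ l → {u : V | G.Adj v u ∧ u ∉ l}.ncard < k) :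
    Contagious G k {v : V | v ∉ l} := by
  intro T hA hT v
  have key : ∀ d : ℕ, ∀ v : V, v ∉ l.take (l.length - d) → v ∈ T := by
    intro d
    induction d with
    | zero =>
      intro v hv
      simp only [Nat.sub_zero, List.take_length] at hv
      exact hA hv
    | succ d ih =>
      intro v hv
      rcases le_or_gt l.length (d + 1) with h | h
      · rcases le_or_gt l.length d with h' | h'
        · exact ih v (by simpa [Nat.sub_eq_zero_of_le h'] using hv)
        · -- l.length = d + 1? then l.length - (d+1) = 0 and l.length - d could be >0
          have hlen : l.length = d + 1 := le_antisymm h h'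
          -- j = 0
          set j := l.length - (d + 1) with hj
          have hjlt : j < l.length := by omega
          have hsucc : l.length - d = j + 1 := by omega
          by_cases hv' : v ∉ l.take (j + 1)
          · exact ih v (hsucc ▸ hv')
          · push_neg at hv'
            have hveq : v = l[j]'hjlt := by
              rw [List.take_succ] at hv'
              simp only [List.mem_append] at hv'
              rcases hv' with h1 | h1
              · exact absurd h1 hv
              · simpa [List.getElem?_eq_getElem hjlt] using h1
            subst hveq
            apply hT
            refine le_trans (hdeg j hjlt) (Set.ncard_le_ncard ?_ (Set.toFinite _))
            rintro u ⟨hadj, hu⟩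
            refine ⟨hadj, ih u ?_⟩
            rw [hsucc, List.take_succ]
            simp only [List.mem_append, not_or]
            refine ⟨hu, ?_⟩
            simp [List.getElem?_eq_getElem hjlt]
            exact fun he => G.irrefl (he ▸ hadj)
      · set j := l.length - (d + 1) with hj
        have hjlt : j < l.length := by omega
        have hsucc : l.length - d = j + 1 := by omega
        by_cases hv' : v ∉ l.take (j + 1)
        · exact ih v (hsucc ▸ hv')
        · push_neg at hv'
          have hveq : v = l[j]'hjlt := by
            rw [List.take_succ] at hv'
            simp only [List.mem_append] at hv'
            rcases hv' with h1 | h1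
            · exact absurd h1 hv
            · simpa [List.getElem?_eq_getElem hjlt] using h1
          subst hveq
          apply hT
          refine le_trans (hdeg j hjlt) (Set.ncard_le_ncard ?_ (Set.toFinite _))
          rintro u ⟨hadj, hu⟩
          refine ⟨hadj, ih u ?_⟩
          rw [hsucc, List.take_succ]
          simp only [List.mem_append, not_or]
          refine ⟨hu, ?_⟩
          simp [List.getElem?_eq_getElem hjlt]
          exact fun he => G.irrefl (he ▸ hadj)
  exact key l.length v (by simp)
end

section
/- Let G = (V,E) be an undirected graph, k ≥ 1, and define w(G) = Σ_{v∈V} min(1, k/(d(v)+1)). If u is a vertex of G with degree δ ≥ k such that every neighbor of u of degree ≥ k has degree ≥ δ, then w(G − u) ≤ w(G). -/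
/-!
Deleting `u` removes its weight `k/(δ+1)` and lowers the degree of each of its `δ` neighbours
by one. A neighbour of degree `d < k` keeps weight `1`; one of degree `d ≥ k` has `d ≥ δ` by
minimality of `δ`, so it gains `k/(d(d+1)) ≤ k/(δ(δ+1))`. The total gain is therefore at most
`δ · k/(δ(δ+1)) = k/(δ+1)`.
-/

/-- The summand of `w(G)` at a vertex of degree `d`. -/
noncomputable def degreeWeight (k d : ℕ) : ℝ := min 1 ((k : ℝ) / (d + 1))

namespace degreeWeight

variable {k d : ℕ}

lemma eq_one_of_lt (h : d < k) : degreeWeight k d = 1 :=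
  min_eq_left <| (one_le_div (by positivity)).2 <| by exact_mod_cast h

lemma eq_div_of_le (h : k ≤ d) : degreeWeight k d = k / (d + 1) :=
  min_eq_right <| (div_le_one (by positivity)).2 <| by exact_mod_cast Nat.le_succ_of_le h

lemma le_one : degreeWeight k d ≤ 1 := min_le_left _ _

/-- Losing a neighbour raises the weight by `k/d - k/(d+1) = k/(d(d+1))` if `d ≥ k`, and not
at all if `d < k`. -/
lemma pred_le_add (hk : 0 < k) {δ : ℕ} (hkδ : k ≤ δ) (hd : 1 ≤ d)
    (hδd : k ≤ d → δ ≤ d) :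
    degreeWeight k (d - 1) ≤ degreeWeight k d + k / (δ * (δ + 1)) := by
  rcases lt_or_ge d k with hdk | hdk
  · rw [eq_one_of_lt hdk]
    have hc : (0 : ℝ) ≤ k / (δ * (δ + 1)) := by positivity
    linarith [(le_one : degreeWeight k (d - 1) ≤ 1)]
  have hδ : (0 : ℝ) < δ := by exact_mod_cast hk.trans_le hkδ
  have hδd' : (δ : ℝ) ≤ d := by exact_mod_cast hδd hdk
  have hd' : ((d - 1 : ℕ) : ℝ) + 1 = d := by rw [Nat.cast_sub hd]; push_cast; ring
  rw [degreeWeight, hd', eq_div_of_le hdk]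
  calc min 1 ((k : ℝ) / d) ≤ k / d := min_le_right _ _
    _ = k / (d + 1) + k / (d * (d + 1)) := by field_simp
    _ ≤ k / (d + 1) + k / (δ * (δ + 1)) := by gcongr

lemma mul_div_eq (hk : 0 < k) (hkd : k ≤ d) :
    d * ((k : ℝ) / (d * (d + 1))) = degreeWeight k d := by
  have : (0 : ℝ) < d := by exact_mod_cast hk.trans_le hkd
  rw [eq_div_of_le hkd]
  field_simp

end degreeWeight

namespace SimpleGraph

variable {V : Type*} [Fintype V] [DecidableEq V] (G : SimpleGraph V) [DecidableRel G.Adj]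

lemma ncard_induce_ne_adj (u : V) (v : {x : V // x ≠ u}) :
    {w : {x : V // x ≠ u} | (G.induce {x : V | x ≠ u}).Adj v w}.ncard =
      ((G.neighborFinset v).erase u).card := by
  rw [← Set.ncard_coe_finset, ← Set.ncard_image_of_injective _ Subtype.val_injective]
  congr 1
  ext w
  simp [and_comm]

lemma card_neighborFinset_erase (u v : V) :
    ((G.neighborFinset v).erase u).card = if G.Adj u v then G.degree v - 1 else G.degree v := by
  split_ifs with h
  · rw [Finset.card_erase_of_mem (by simpa using h.symm), card_neighborFinset_eq_degree]
  · rw [Finset.erase_eq_of_notMem (by simpa [adj_comm] using h), card_neighborFinset_eq_degree]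

variable {k : ℕ} {u : V}

lemma degreeWeight_card_erase_le (hk : 0 < k) (hku : k ≤ G.degree u)
    (hmin : ∀ w, G.Adj u w → k ≤ G.degree w → G.degree u ≤ G.degree w) (v : V) :
    degreeWeight k ((G.neighborFinset v).erase u).card ≤ degreeWeight k (G.degree v) +
      if G.Adj u v then (k : ℝ) / (G.degree u * (G.degree u + 1)) else 0 := by
  rw [card_neighborFinset_erase]
  split_ifs with h
  · have hv : 1 ≤ G.degree v := Finset.card_pos.2 ⟨u, by simpa using h.symm⟩
    exact degreeWeight.pred_le_add hk hku hv (hmin v h)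
  · rw [add_zero]

lemma sum_degreeWeight_card_erase_le (hk : 0 < k) (hku : k ≤ G.degree u)
    (hmin : ∀ w, G.Adj u w → k ≤ G.degree w → G.degree u ≤ G.degree w) :
    ∑ v ∈ Finset.univ.erase u, degreeWeight k ((G.neighborFinset v).erase u).card ≤
      degreeWeight k (G.degree u) + ∑ v ∈ Finset.univ.erase u, degreeWeight k (G.degree v) := by
  set c : ℝ := k / (G.degree u * (G.degree u + 1))
  have hneighbors :
      ∑ v ∈ Finset.univ.erase u, (if G.Adj u v then c else 0) = G.degree u * c := by
    rw [← Finset.sum_filter, Finset.sum_const, nsmul_eq_mul, ← card_neighborFinset_eq_degree]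
    congr 3
    ext w
    simpa using fun h => (G.ne_of_adj h).symm
  calc _ ≤ ∑ v ∈ Finset.univ.erase u,
          (degreeWeight k (G.degree v) + if G.Adj u v then c else 0) :=
        Finset.sum_le_sum fun v _ => G.degreeWeight_card_erase_le hk hku hmin v
    _ = _ := by
      rw [Finset.sum_add_distrib, hneighbors, degreeWeight.mul_div_eq hk hku, add_comm]

end SimpleGraph

theorem stmt_3 {V : Type*} [Fintype V] [DecidableEq V] (G : SimpleGraph V)
    [DecidableRel G.Adj] (k : ℕ) (hk : 0 < k) (u : V) (δ : ℕ)
    (hδ : G.degree u = δ) (hkδ : k ≤ δ)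
    (hmin : ∀ w : V, G.Adj u w → k ≤ G.degree w → δ ≤ G.degree w) :
    ∑ v : {x : V // x ≠ u},
        min 1 ((k : ℝ) / ({w : {x : V // x ≠ u} |
          (G.induce {x : V | x ≠ u}).Adj v w}.ncard + 1)) ≤
      ∑ v : V, min 1 ((k : ℝ) / (G.degree v + 1)) := by
  subst hδ
  have hdeleted : ∑ v : {x : V // x ≠ u}, min 1 ((k : ℝ) / ({w : {x : V // x ≠ u} |
        (G.induce {x : V | x ≠ u}).Adj v w}.ncard + 1)) =
      ∑ v ∈ Finset.univ.erase u, degreeWeight k ((G.neighborFinset v).erase u).card := by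
    simp only [G.ncard_induce_ne_adj]
    exact (Finset.sum_subtype (Finset.univ.erase u) (by simp)
      fun v => degreeWeight k ((G.neighborFinset v).erase u).card).symm
  rw [hdeleted, ← Finset.add_sum_erase _ _ (Finset.mem_univ u)]
  exact G.sum_degreeWeight_card_erase_le hk hkδ hmin
end

section
/- For any undirected graph G = (V,E) and positive integer k, the greedy algorithm that repeatedly deletes a vertex of minimum degree among those of degree at least k (until all remaining vertices have degree < k) outputs a contagious set I with |I| ≤ Σ_{v∈V} min(1, k/(d(v)+1)), where degrees are taken in the original graph G. -/
open Finset

theorem List.mem_take_add_one_iff {α : Type*} {l : List α} {j : ℕ} (hj : j < l.length) {a : α} :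
    a ∈ l.take (j + 1) ↔ a ∈ l.take j ∨ a = l[j] := by
  simp only [List.take_add_one, List.getElem?_eq_getElem hj, Option.toList_some,
    List.mem_append, List.mem_singleton]

theorem List.toFinset_take_add_one {α : Type*} [DecidableEq α] {l : List α} {j : ℕ}
    (hj : j < l.length) : (l.take (j + 1)).toFinset = insert l[j] (l.take j).toFinset := by
  ext a
  simp [List.mem_take_add_one_iff hj, or_comm]

theorem contagious_setOf_notMem {V : Type*} {G : SimpleGraph V} [G.LocallyFinite] {k : ℕ}
    {l : List V} (hdeg : ∀ (j : ℕ) (hj : j < l.length),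
      k ≤ {u : V | G.Adj (l[j]'hj) u ∧ u ∉ l.take j}.ncard) :
    Contagious G k {v : V | v ∉ l} := by
  intro T hT hcl
  have active : ∀ j ≤ l.length, ∀ v ∉ l.take j, v ∈ T := by
    intro j hj
    induction hj using Nat.decreasingInduction with
    | self => simpa using fun v hv => hT hv
    | of_succ j hj ih =>
      intro v hv
      by_cases hvj : v ∈ l.take (j + 1)
      · obtain rfl : v = l[j] := ((List.mem_take_add_one_iff hj).1 hvj).resolve_left hv
        refine hcl _ ((hdeg j hj).trans (Set.ncard_le_ncard ?_
          ((G.neighborSet l[j]).toFinite.subset fun u hu => hu.1)))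
        rintro u ⟨hadj, hu⟩
        refine ⟨hadj, ih u ?_⟩
        rw [List.mem_take_add_one_iff hj]
        exact fun h => h.elim hu hadj.ne'
      · exact ih v hvj
  exact fun v => active 0 (Nat.zero_le _) v (by simp)

noncomputable def greedyWeight (k t : ℕ) : ℝ := min 1 ((k : ℝ) / (t + 1))

theorem greedyWeight_of_lt {k t : ℕ} (h : t < k) : greedyWeight k t = 1 := by
  refine min_eq_left ?_
  rw [one_le_div (by positivity)]
  exact_mod_cast h

theorem greedyWeight_of_le {k t : ℕ} (h : k ≤ t) : greedyWeight k t = k / (t + 1) := by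
  refine min_eq_right ?_
  rw [div_le_one (by positivity)]
  exact_mod_cast h.trans (Nat.le_succ t)

theorem greedyWeight_sub_succ_le {k d D : ℕ} (hkd : k ≤ d) (hdD : k ≤ D + 1 → d ≤ D + 1) :
    greedyWeight k D - greedyWeight k (D + 1) ≤ k / (d * (d + 1)) := by
  rcases lt_or_ge (D + 1) k with hD | hD
  · rw [greedyWeight_of_lt (by omega), greedyWeight_of_lt hD, sub_self]
    positivity
  rcases Nat.eq_zero_or_pos k with rfl | hk
  · simp [greedyWeight]
  have hd : (0 : ℝ) < d := by exact_mod_cast hk.trans_le hkd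
  have hdD' : (d : ℝ) ≤ D + 1 := by exact_mod_cast hdD hD
  calc greedyWeight k D - greedyWeight k (D + 1)
      ≤ k / (D + 1) - k / (D + 1 + 1) := by
        rw [greedyWeight_of_le hD]
        push_cast
        exact sub_le_sub_right (min_le_right _ _) _
    _ = k / ((D + 1) * (D + 1 + 1)) := by field_simp; ring
    _ ≤ k / (d * (d + 1)) := by gcongr

namespace SimpleGraph

variable {V : Type*} [Fintype V] [DecidableEq V] (G : SimpleGraph V) [DecidableRel G.Adj]

def degreeOutside (S : Finset V) (v : V) : ℕ := #(G.neighborFinset v \ S)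

theorem degreeOutside_empty (v : V) : G.degreeOutside ∅ v = G.degree v := by
  rw [degreeOutside, sdiff_empty, card_neighborFinset_eq_degree]

theorem degreeOutside_insert_of_adj {S : Finset V} {x v : V} (hx : x ∉ S) (h : G.Adj v x) :
    G.degreeOutside (insert x S) v + 1 = G.degreeOutside S v := by
  rw [degreeOutside, degreeOutside, sdiff_insert, card_erase_add_one]
  simpa [hx] using h

theorem degreeOutside_insert_of_not_adj {S : Finset V} {x v : V} (h : ¬G.Adj v x) :
    G.degreeOutside (insert x S) v = G.degreeOutside S v := by
  rw [degreeOutside, degreeOutside, sdiff_insert, erase_eq_of_notMem]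
  simp [h]

theorem ncard_setOf_adj_notMem (s : List V) (v : V) :
    {u : V | G.Adj v u ∧ u ∉ s}.ncard = G.degreeOutside s.toFinset v := by
  rw [degreeOutside, ← Set.ncard_coe_finset]
  congr 1
  ext u
  simp

noncomputable def greedyPotential (k : ℕ) (S : Finset V) : ℝ :=
  ∑ v ∈ Sᶜ, greedyWeight k (G.degreeOutside S v)

theorem greedyPotential_empty (k : ℕ) :
    G.greedyPotential k ∅ = ∑ v : V, min 1 ((k : ℝ) / (G.degree v + 1)) := by
  simp only [greedyPotential, compl_empty, degreeOutside_empty, greedyWeight]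

theorem greedyPotential_of_forall_lt {k : ℕ} {S : Finset V}
    (h : ∀ v ∉ S, G.degreeOutside S v < k) : G.greedyPotential k S = #Sᶜ := by
  rw [greedyPotential, sum_congr rfl fun v hv => greedyWeight_of_lt (h v (mem_compl.1 hv)),
    sum_const, nsmul_one]

theorem greedyPotential_insert_le {k : ℕ} {S : Finset V} {x : V} (hx : x ∉ S)
    (hkx : k ≤ G.degreeOutside S x)
    (hmin : ∀ y ∉ S, k ≤ G.degreeOutside S y → G.degreeOutside S x ≤ G.degreeOutside S y) :
    G.greedyPotential k (insert x S) ≤ G.greedyPotential k S := by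
  set d := G.degreeOutside S x
  have gain : ∀ v ∈ Sᶜ.erase x,
      greedyWeight k (G.degreeOutside (insert x S) v) - greedyWeight k (G.degreeOutside S v) ≤
        if G.Adj x v then (k : ℝ) / (d * (d + 1)) else 0 := by
    intro v hv
    have hvS : v ∉ S := mem_compl.1 (mem_of_mem_erase hv)
    split_ifs with hxv
    · have hdeg := G.degreeOutside_insert_of_adj hx hxv.symm
      rw [← hdeg]
      exact greedyWeight_sub_succ_le hkx fun h => hdeg ▸ hmin v hvS (hdeg ▸ h)
    · rw [G.degreeOutside_insert_of_not_adj (mt G.adj_symm hxv), sub_self]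
  have total : ∑ v ∈ Sᶜ.erase x, (if G.Adj x v then (k : ℝ) / (d * (d + 1)) else 0) =
      greedyWeight k d := by
    have hnbrs : #{v ∈ Sᶜ.erase x | G.Adj x v} = d := by
      refine congrArg card (ext fun u => ?_)
      simp only [mem_filter, mem_erase, mem_compl, mem_sdiff, mem_neighborFinset]
      exact ⟨fun h => ⟨h.2, h.1.2⟩, fun h => ⟨⟨h.1.ne', h.2⟩, h.1⟩⟩
    rw [← sum_filter, sum_const, hnbrs, nsmul_eq_mul, greedyWeight_of_le hkx]
    rcases Nat.eq_zero_or_pos d with hd | hd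
    · simp [hd, Nat.le_zero.1 (hd ▸ hkx)]
    · field_simp
  have hsum := sum_le_sum gain
  rw [sum_sub_distrib, total] at hsum
  rw [greedyPotential, greedyPotential, compl_insert, ← insert_erase (mem_compl.2 hx),
    sum_insert (notMem_erase x _), erase_insert_eq_erase, erase_idem]
  linarith

theorem antitone_greedyPotential_take {k : ℕ} {l : List V}
    (hdeg : ∀ (j : ℕ) (hj : j < l.length), k ≤ G.degreeOutside (l.take j).toFinset l[j])
    (hmin : ∀ (j : ℕ) (hj : j < l.length), ∀ y : V, y ∉ l.take j →
      k ≤ G.degreeOutside (l.take j).toFinset y →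
      G.degreeOutside (l.take j).toFinset l[j] ≤ G.degreeOutside (l.take j).toFinset y) :
    Antitone fun j => G.greedyPotential k (l.take j).toFinset := by
  refine antitone_nat_of_succ_le fun j => ?_
  rcases lt_or_ge j l.length with hj | hj
  · rw [List.toFinset_take_add_one hj]
    by_cases hx : l[j] ∈ (l.take j).toFinset
    · rw [insert_eq_of_mem hx]
    · exact G.greedyPotential_insert_le hx (hdeg j hj)
        fun y hy => hmin j hj y (by simpa using hy)
  · rw [List.take_of_length_le hj, List.take_of_length_le (by omega)]

end SimpleGraph

theorem stmt_4_general {V : Type*} [Fintype V] [DecidableEq V] (G : SimpleGraph V)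
    [DecidableRel G.Adj] (k : ℕ) (l : List V)
    (hdeg : ∀ (j : ℕ) (hj : j < l.length),
      k ≤ {u : V | G.Adj (l[j]'hj) u ∧ u ∉ l.take j}.ncard)
    (hmin : ∀ (j : ℕ) (hj : j < l.length), ∀ x : V, x ∉ l.take j →
      k ≤ {u : V | G.Adj x u ∧ u ∉ l.take j}.ncard →
      {u : V | G.Adj (l[j]'hj) u ∧ u ∉ l.take j}.ncard ≤
        {u : V | G.Adj x u ∧ u ∉ l.take j}.ncard)
    (hterm : ∀ v : V, v ∉ l → {u : V | G.Adj v u ∧ u ∉ l}.ncard < k) :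
    Contagious G k {v : V | v ∉ l} ∧
      (({v : V | v ∉ l}.ncard : ℝ)) ≤ ∑ v : V, min 1 ((k : ℝ) / (G.degree v + 1)) := by
  refine ⟨contagious_setOf_notMem hdeg, ?_⟩
  simp only [SimpleGraph.ncard_setOf_adj_notMem] at hdeg hmin hterm
  have hI : {v : V | v ∉ l} = ↑(l.toFinset)ᶜ := by
    ext v
    simp
  have hfinal : G.greedyPotential k l.toFinset = #(l.toFinset)ᶜ :=
    G.greedyPotential_of_forall_lt fun v hv => hterm v (by simpa using hv)
  calc (({v : V | v ∉ l}.ncard : ℕ) : ℝ) = G.greedyPotential k (l.take l.length).toFinset := by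
        rw [hI, Set.ncard_coe_finset, List.take_length, hfinal]
    _ ≤ G.greedyPotential k (l.take 0).toFinset :=
        G.antitone_greedyPotential_take hdeg hmin (Nat.zero_le _)
    _ = ∑ v : V, min 1 ((k : ℝ) / (G.degree v + 1)) := by
        rw [List.take_zero, List.toFinset_nil, SimpleGraph.greedyPotential_empty]

theorem stmt_4 {V : Type*} [Fintype V] [DecidableEq V] (G : SimpleGraph V)
    [DecidableRel G.Adj] (k : ℕ) (hk : 0 < k) (l : List V) (hnd : l.Nodup)
    (hdeg : ∀ (j : ℕ) (hj : j < l.length),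
      k ≤ {u : V | G.Adj (l[j]'hj) u ∧ u ∉ l.take j}.ncard)
    (hmin : ∀ (j : ℕ) (hj : j < l.length), ∀ x : V, x ∉ l.take j →
      k ≤ {u : V | G.Adj x u ∧ u ∉ l.take j}.ncard →
      {u : V | G.Adj (l[j]'hj) u ∧ u ∉ l.take j}.ncard ≤
        {u : V | G.Adj x u ∧ u ∉ l.take j}.ncard)
    (hterm : ∀ v : V, v ∉ l → {u : V | G.Adj v u ∧ u ∉ l}.ncard < k) :
    Contagious G k {v : V | v ∉ l} ∧
      (({v : V | v ∉ l}.ncard : ℝ)) ≤ ∑ v : V, min 1 ((k : ℝ) / (G.degree v + 1)) :=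
  stmt_4_general G k l hdeg hmin hterm
end

section
/- Let σ be a uniformly random permutation of the vertices of an undirected graph G = (V,E), and let L be the set of vertices v such that fewer than k of the neighbors of v precede v in σ. Then E[|L|] = Σ_{v∈V} min(1, k/(d(v)+1)). -/
namespace Stmt6Aux

open Finset

variable {V : Type*} [Fintype V] [DecidableEq V] (G : SimpleGraph V)
  [DecidableRel G.Adj]

/-- closed neighborhood of `v` as a finset -/
def Sv (v : V) : Finset V := insert v (G.neighborFinset v)

/-- rank of `w` within the closed neighborhood of `v` under `σ` -/
def rk (σ : V ≃ Fin (Fintype.card V)) (v w : V) : ℕ :=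
  ((Sv G v).filter (fun u => σ u < σ w)).card

lemma card_Sv (v : V) : (Sv G v).card = G.degree v + 1 := by
  rw [Sv, card_insert_of_notMem (SimpleGraph.notMem_neighborFinset_self G v),
    G.card_neighborFinset_eq_degree]

lemma rk_le (σ : V ≃ Fin (Fintype.card V)) {v w : V} (hw : w ∈ Sv G v) :
    rk G σ v w ≤ G.degree v := by
  have h : (Sv G v).filter (fun u => σ u < σ w) ⊆ (Sv G v).erase w := by
    intro u hu
    simp only [mem_filter] at hu
    refine mem_erase.2 ⟨?_, hu.1⟩
    rintro rfl; exact lt_irrefl _ hu.2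
  calc rk G σ v w ≤ ((Sv G v).erase w).card := card_le_card h
    _ = G.degree v := by rw [card_erase_of_mem hw, card_Sv]; rfl

lemma rk_injOn (σ : V ≃ Fin (Fintype.card V)) (v : V) :
    Set.InjOn (rk G σ v) (Sv G v) := by
  have key : ∀ w w', w ∈ Sv G v → w' ∈ Sv G v → σ w < σ w' → rk G σ v w < rk G σ v w' := by
    intro w w' hw hw' hlt
    apply card_lt_card
    constructor
    · intro u hu
      simp only [mem_filter] at hu ⊢
      exact ⟨hu.1, hu.2.trans hlt⟩
    · intro hsub
      have : w ∈ (Sv G v).filter (fun u => σ u < σ w') := by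
        simp only [mem_filter]; exact ⟨hw, hlt⟩
      have := hsub this
      simp only [mem_filter] at this
      exact lt_irrefl _ this.2
  intro w hw w' hw' he
  rcases lt_trichotomy (σ w) (σ w') with h | h | h
  · exact absurd he (key w w' hw hw' h).ne
  · exact σ.injective h
  · exact absurd he.symm (key w' w hw' hw h).ne

lemma lemB (σ : V ≃ Fin (Fintype.card V)) (v : V) (k : ℕ) :
    ((Sv G v).filter (fun w => rk G σ v w < k)).card = min (G.degree v + 1) k := by
  have himg : (Sv G v).image (rk G σ v) = Finset.range (G.degree v + 1) := by
    apply eq_of_subset_of_card_le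
    · intro x hx
      simp only [mem_image] at hx
      obtain ⟨w, hw, rfl⟩ := hx
      simpa [Nat.lt_succ_iff] using rk_le G σ hw
    · rw [card_range, ← card_Sv G v, card_image_of_injOn (rk_injOn G σ v)]
  have h1 : ((Sv G v).filter (fun w => rk G σ v w < k)).card
      = (((Sv G v).filter (fun w => rk G σ v w < k)).image (rk G σ v)).card := by
    rw [card_image_of_injOn ((rk_injOn G σ v).mono (filter_subset _ _))]
  have h2 : ((Sv G v).image (rk G σ v)).filter (fun x => x < k)
      = ((Sv G v).filter (fun w => rk G σ v w < k)).image (rk G σ v) :=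
    Finset.filter_image
  have h3 : (Finset.range (G.degree v + 1)).filter (fun x => x < k)
      = Finset.range (min (G.degree v + 1) k) := by
    ext x; simp [lt_min_iff]
  rw [h1, ← h2, himg, h3, card_range]

lemma rk_swap (σ : V ≃ Fin (Fintype.card V)) {v w w' : V} (hw : w ∈ Sv G v)
    (hw' : w' ∈ Sv G v) :
    rk G ((Equiv.swap w w').trans σ) v w' = rk G σ v w := by
  set e := Equiv.swap w w' with he
  have himg : (Sv G v).image e = Sv G v := by
    apply eq_of_subset_of_card_le
    · intro x hx
      simp only [mem_image] at hx
      obtain ⟨u, hu, rfl⟩ := hx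
      rw [he, Equiv.swap_apply_def]
      split_ifs <;> assumption
    · rw [card_image_of_injective _ e.injective]
  have hkey : ((Sv G v).image e).filter (fun x => σ x < σ w)
      = ((Sv G v).filter (fun u => σ (e u) < σ w)).image e := Finset.filter_image
  have hw'w : e w' = w := Equiv.swap_apply_right w w'
  show ((Sv G v).filter (fun u => σ (e u) < σ (e w'))).card = _
  rw [hw'w, rk, ← card_image_of_injective ((Sv G v).filter (fun u => σ (e u) < σ w))
    e.injective, ← hkey, himg]

lemma lemA (v : V) (k : ℕ) {w w' : V} (hw : w ∈ Sv G v) (hw' : w' ∈ Sv G v) :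
    (univ.filter (fun σ : V ≃ Fin (Fintype.card V) => rk G σ v w < k)).card
    = (univ.filter (fun σ : V ≃ Fin (Fintype.card V) => rk G σ v w' < k)).card := by
  apply Finset.card_bij' (fun σ _ => (Equiv.swap w w').trans σ)
    (fun σ _ => (Equiv.swap w w').trans σ)
  · intro σ hσ
    simp only [mem_filter, mem_univ, true_and] at hσ ⊢
    rwa [rk_swap G σ hw hw']
  · intro σ hσ
    simp only [mem_filter, mem_univ, true_and] at hσ ⊢
    rwa [Equiv.swap_comm, rk_swap G σ hw' hw]
  · intro σ _; ext u; simp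
  · intro σ _; ext u; simp

lemma per_vertex (v : V) (k : ℕ) :
    (G.degree v + 1) * (univ.filter (fun σ : V ≃ Fin (Fintype.card V) => rk G σ v v < k)).card
    = (Fintype.card V).factorial * min (G.degree v + 1) k := by
  have hv : v ∈ Sv G v := mem_insert_self _ _
  calc (G.degree v + 1) *
        (univ.filter (fun σ : V ≃ Fin (Fintype.card V) => rk G σ v v < k)).card
      = ∑ w ∈ Sv G v,
        (univ.filter (fun σ : V ≃ Fin (Fintype.card V) => rk G σ v w < k)).card := by
        rw [Finset.sum_congr rfl (fun w hw => lemA G v k hw hv), sum_const, card_Sv G v,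
          smul_eq_mul]
    _ = ∑ w ∈ Sv G v, ∑ σ : V ≃ Fin (Fintype.card V), if rk G σ v w < k then 1 else 0 := by
        refine Finset.sum_congr rfl fun w _ => ?_
        rw [card_filter]
    _ = ∑ σ : V ≃ Fin (Fintype.card V), ∑ w ∈ Sv G v, if rk G σ v w < k then 1 else 0 :=
        Finset.sum_comm
    _ = ∑ σ : V ≃ Fin (Fintype.card V), min (G.degree v + 1) k := by
        refine Finset.sum_congr rfl fun σ _ => ?_
        rw [← card_filter, lemB]
    _ = (Fintype.card V).factorial * min (G.degree v + 1) k := by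
        rw [sum_const, card_univ, Fintype.card_equiv (Fintype.equivFin V), smul_eq_mul]

lemma ncard_inner (σ : V ≃ Fin (Fintype.card V)) (v : V) :
    {u : V | G.Adj v u ∧ σ u < σ v}.ncard = rk G σ v v := by
  have h1 : {u : V | G.Adj v u ∧ σ u < σ v}
      = ↑((G.neighborFinset v).filter (fun u => σ u < σ v)) := by
    ext u; simp [SimpleGraph.mem_neighborFinset]
  rw [h1, Set.ncard_coe_finset, rk, Sv, filter_insert, if_neg (lt_irrefl _)]

end Stmt6Aux

theorem stmt_6 {V : Type*} [Fintype V] [DecidableEq V] (G : SimpleGraph V)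
    [DecidableRel G.Adj] (k : ℕ) (hk : 0 < k) :
    (∑ σ : V ≃ Fin (Fintype.card V),
        ({v : V | {u : V | G.Adj v u ∧ σ u < σ v}.ncard < k}.ncard : ℝ)) =
      (Fintype.card V).factorial * ∑ v : V, min 1 ((k : ℝ) / (G.degree v + 1)) := by
  open Finset Stmt6Aux in
  have hstep1 : ∀ σ : V ≃ Fin (Fintype.card V),
      ({v : V | {u : V | G.Adj v u ∧ σ u < σ v}.ncard < k}.ncard : ℝ)
      = ((univ.filter (fun v : V => rk G σ v v < k)).card : ℝ) := by
    intro σ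
    congr 1
    have h1 : {v : V | {u : V | G.Adj v u ∧ σ u < σ v}.ncard < k}
        = ↑(univ.filter (fun v : V => rk G σ v v < k)) := by
      ext v; simp [ncard_inner G σ v]
    rw [h1, Set.ncard_coe_finset]
  rw [Finset.sum_congr rfl fun σ _ => hstep1 σ]
  have hswap : (∑ σ : V ≃ Fin (Fintype.card V),
      ((univ.filter (fun v : V => rk G σ v v < k)).card : ℝ))
      = ∑ v : V, ((univ.filter
          (fun σ : V ≃ Fin (Fintype.card V) => rk G σ v v < k)).card : ℝ) := by
    simp only [Finset.card_filter]
    push_cast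
    exact Finset.sum_comm
  rw [hswap, Finset.mul_sum]
  refine Finset.sum_congr rfl fun v _ => ?_
  have hd : (0 : ℝ) < (G.degree v : ℝ) + 1 := by positivity
  have hpv := per_vertex G v k
  have hpvR : ((G.degree v : ℝ) + 1) *
      ((univ.filter (fun σ : V ≃ Fin (Fintype.card V) => rk G σ v v < k)).card : ℝ)
      = ((Fintype.card V).factorial : ℝ) * min ((G.degree v : ℝ) + 1) (k : ℝ) := by
    have := congrArg (fun n : ℕ => (n : ℝ)) hpv
    push_cast at this
    convert this using 2
  have hmin : ((G.degree v : ℝ) + 1) * min 1 ((k : ℝ) / ((G.degree v : ℝ) + 1))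
      = min ((G.degree v : ℝ) + 1) (k : ℝ) := by
    rw [mul_min_of_nonneg _ _ hd.le, mul_one, mul_div_cancel₀ _ hd.ne']
  apply mul_left_cancel₀ hd.ne'
  rw [hpvR, ← mul_assoc, mul_comm (((G.degree v : ℝ)) + 1) (((Fintype.card V).factorial : ℝ)),
    mul_assoc, hmin]
end

section
/- Let G be an undirected graph with n vertices and minimum degree d, and activate each vertex independently with probability p. The expected number of vertices with fewer than 2 activated vertices among themselves and their neighbors (i.e., not '2-covered') is at most n·((1−p)^{d+1} + p(d+1)(1−p)^d) — in particular at most n·((1−p)^{d} + pd(1−p)^{d-1}) using only d neighbors. Consequently, G has a 2-dominating set of size at most np + n((1−p)^{d+1} + pd(1−p)^d) for every p ∈ [0,1]. -/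
open Finset

set_option linter.unusedSectionVars false
set_option linter.unusedVariables false


section aux
variable {V : Type*} [Fintype V] [DecidableEq V]

lemma sum_w_powerset (p q : ℝ) (hpq : p + q = 1) (U : Finset V) :
    ∑ B ∈ U.powerset, p ^ B.card * q ^ (U.card - B.card) = 1 := by
  have h := Finset.prod_add (fun _ : V => p) (fun _ => q) U
  simp only [Finset.prod_const, hpq, one_pow] at h
  rw [eq_comm]
  rw [h]
  exact Finset.sum_congr rfl fun B hB => by
    rw [Finset.card_sdiff_of_subset (Finset.mem_powerset.mp hB)]

lemma sum_w_fiber (p q : ℝ) (hpq : p + q = 1) (T A : Finset V) (hAT : A ⊆ T) :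
    ∑ S ∈ univ.filter (fun S : Finset V => S ∩ T = A),
      p ^ S.card * q ^ (Fintype.card V - S.card)
    = p ^ A.card * q ^ (T.card - A.card) := by
  have h1 : ∑ B ∈ (Tᶜ : Finset V).powerset,
      p ^ A.card * q ^ (T.card - A.card) * (p ^ B.card * q ^ ((Tᶜ : Finset V).card - B.card))
      = p ^ A.card * q ^ (T.card - A.card) := by
    rw [← Finset.mul_sum, sum_w_powerset p q hpq, mul_one]
  rw [← h1]
  refine Finset.sum_nbij' (fun S => S \ T) (fun B => A ∪ B) ?_ ?_ ?_ ?_ ?_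
  · intro S hS
    simp only [Finset.mem_filter] at hS
    simp only [Finset.mem_powerset]
    intro x hx
    simp only [Finset.mem_sdiff] at hx
    simp [hx.2]
  · intro B hB
    simp only [Finset.mem_powerset] at hB
    simp only [Finset.mem_filter, Finset.mem_univ, true_and]
    ext x
    simp only [Finset.mem_inter, Finset.mem_union]
    constructor
    · rintro ⟨h1 | h1, h2⟩
      · exact h1
      · exact absurd h2 (by simpa using hB h1)
    · intro hx; exact ⟨Or.inl hx, hAT hx⟩
  · intro S hS
    simp only [Finset.mem_filter] at hS
    rw [← hS.2]
    ext x
    simp only [Finset.mem_union, Finset.mem_inter, Finset.mem_sdiff]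
    tauto
  · intro B hB
    simp only [Finset.mem_powerset] at hB
    ext x
    simp only [Finset.mem_sdiff, Finset.mem_union]
    constructor
    · rintro ⟨h1 | h1, h2⟩
      · exact absurd (hAT h1) h2
      · exact h1
    · intro hx
      exact ⟨Or.inr hx, by simpa using hB hx⟩
  · intro S hS
    simp only [Finset.mem_filter] at hS
    have hcard : S.card = A.card + (S \ T).card := by
      rw [← hS.2]
      rw [Finset.card_inter_add_card_sdiff]
    have hA : A.card ≤ T.card := Finset.card_le_card hAT
    have hST : (S \ T).card ≤ (Tᶜ : Finset V).card := by
      apply Finset.card_le_card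
      intro x hx
      simp only [Finset.mem_sdiff] at hx
      simp [hx.2]
    have hTc : (Tᶜ : Finset V).card = Fintype.card V - T.card := by
      simp [Finset.card_compl]
    have hSn : S.card ≤ Fintype.card V := Finset.card_le_univ S
    have hTn : T.card ≤ Fintype.card V := Finset.card_le_univ T
    have hexp : Fintype.card V - S.card =
        (T.card - A.card) + ((Tᶜ : Finset V).card - (S \ T).card) := by
      omega
    rw [hcard] at hexp
    simp only [hcard, hexp, pow_add]
    ring

lemma sum_w_fail (p q : ℝ) (hpq : p + q = 1) (G : SimpleGraph V) [DecidableRel G.Adj] (v : V) :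
    ∑ S ∈ univ.filter (fun S : Finset V => v ∉ S ∧ (G.neighborFinset v ∩ S).card < 2),
      p ^ S.card * q ^ (Fintype.card V - S.card)
    = q ^ (G.degree v + 1) + (G.degree v : ℝ) * p * q ^ (G.degree v) := by
  set N := G.neighborFinset v with hN
  set T : Finset V := insert v N with hT
  have hvN : v ∉ N := by simp [hN]
  have hTcard : T.card = G.degree v + 1 := by
    rw [hT, Finset.card_insert_of_notMem hvN, ← SimpleGraph.card_neighborFinset_eq_degree]
  set 𝒜 : Finset (Finset V) := insert ∅ (N.image fun u => {u}) with h𝒜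
  have hfilter : (univ.filter (fun S : Finset V => v ∉ S ∧ (N ∩ S).card < 2))
      = 𝒜.biUnion (fun A => univ.filter (fun S : Finset V => S ∩ T = A)) := by
    ext S
    simp only [Finset.mem_filter, Finset.mem_univ, true_and, Finset.mem_biUnion, h𝒜,
      Finset.mem_insert, Finset.mem_image]
    constructor
    · rintro ⟨hvS, hcard⟩
      have hST : S ∩ T = S ∩ N := by
        rw [hT, Finset.inter_insert_of_notMem hvS]
      interval_cases h : (N ∩ S).card
      · refine ⟨∅, Or.inl rfl, ?_⟩
        rw [hST, Finset.inter_comm, Finset.card_eq_zero.mp h]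
      · obtain ⟨u, hu⟩ := Finset.card_eq_one.mp h
        refine ⟨{u}, Or.inr ⟨u, ?_, rfl⟩, ?_⟩
        · have : u ∈ N ∩ S := hu ▸ Finset.mem_singleton_self u
          exact (Finset.mem_inter.mp this).1
        · rw [hST, Finset.inter_comm, hu]
    · rintro ⟨A, hA, hSA⟩
      have hvS : v ∉ S := by
        intro hvS
        have hvT : v ∈ S ∩ T := Finset.mem_inter.mpr ⟨hvS, Finset.mem_insert_self v N⟩
        rw [hSA] at hvT
        rcases hA with rfl | ⟨u, huN, rfl⟩
        · simp at hvT
        · rw [Finset.mem_singleton] at hvT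
          exact hvN (hvT ▸ huN)
      have hST : S ∩ T = S ∩ N := by
        rw [hT, Finset.inter_insert_of_notMem hvS]
      refine ⟨hvS, ?_⟩
      rw [Finset.inter_comm, ← hST, hSA]
      rcases hA with rfl | ⟨u, huN, rfl⟩ <;> simp
  rw [hfilter, Finset.sum_biUnion]
  · have hsing : ∀ A ∈ N.image (fun u => ({u} : Finset V)),
        ∑ S ∈ univ.filter (fun S : Finset V => S ∩ T = A),
          p ^ S.card * q ^ (Fintype.card V - S.card) = p * q ^ G.degree v := by
      intro A hA
      obtain ⟨u, huN, rfl⟩ := Finset.mem_image.mp hA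
      rw [sum_w_fiber p q hpq T {u} (by simp [hT, huN])]
      simp [hTcard]
    rw [h𝒜, Finset.sum_insert (by simp)]
    rw [Finset.sum_congr rfl hsing, Finset.sum_const,
      Finset.card_image_of_injective _ (fun a b h => by simpa using h)]
    rw [sum_w_fiber p q hpq T ∅ (Finset.empty_subset T)]
    simp only [Finset.card_empty, pow_zero, one_mul, Nat.sub_zero, hTcard,
      ← SimpleGraph.card_neighborFinset_eq_degree, nsmul_eq_mul]
    ring
  · intro A hA B hB hAB
    simp only [Finset.disjoint_left, Finset.mem_coe, Finset.mem_filter]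
    rintro S ⟨-, h1⟩ ⟨-, h2⟩
    exact hAB (h1 ▸ h2 ▸ rfl)

lemma fmono (p q : ℝ) (hp : 0 ≤ p) (hq : 0 ≤ q) (hpq : p + q = 1) :
    ∀ k d : ℕ, d ≤ k → q ^ (k + 1) + k * p * q ^ k ≤ q ^ (d + 1) + d * p * q ^ d := by
  intro k
  induction k with
  | zero =>
    intro d hd
    obtain rfl : d = 0 := Nat.le_zero.mp hd
    exact le_refl _
  | succ k ih =>
    intro d hd
    rcases Nat.eq_or_lt_of_le hd with rfl | hlt
    · exact le_refl _
    · have h1 : q ^ (k + 1 + 1) + (↑(k+1)) * p * q ^ (k + 1) ≤ q ^ (k + 1) + k * p * q ^ k := by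
        have hqk : (0:ℝ) ≤ q ^ k := pow_nonneg hq k
        have hk : (0:ℝ) ≤ (k:ℝ) := Nat.cast_nonneg k
        have key : q * q + (↑k + 1) * p * q ≤ q + ↑k * p := by
          have hq' : q = 1 - p := by linarith
          rw [hq']
          nlinarith [mul_nonneg hk (mul_nonneg hp hp)]
        calc q ^ (k + 1 + 1) + (↑(k+1)) * p * q ^ (k + 1)
            = q ^ k * (q * q + (↑k + 1) * p * q) := by push_cast; ring
          _ ≤ q ^ k * (q + ↑k * p) := by
              exact mul_le_mul_of_nonneg_left key hqk
          _ = q ^ (k + 1) + ↑k * p * q ^ k := by ring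
      exact le_trans h1 (ih d (Nat.lt_succ_iff.mp hlt))


end aux

theorem stmt_13 {V : Type*} [Fintype V] [DecidableEq V] (G : SimpleGraph V)
    [DecidableRel G.Adj] (d : ℕ) (hd : 1 ≤ d) (hmin : ∀ v : V, d ≤ G.degree v)
    (p : ℝ) (hp0 : 0 ≤ p) (hp1 : p ≤ 1) :
    (∑ S : Finset V, p ^ S.card * (1 - p) ^ (Fintype.card V - S.card) *
        ({v : V | v ∉ S ∧ {u : V | G.Adj v u ∧ u ∈ S}.ncard < 2}.ncard : ℝ)) ≤
      (Fintype.card V) * ((1 - p) ^ (d + 1) + p * (d + 1) * (1 - p) ^ d) ∧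
    ∃ D : Finset V, (∀ v : V, v ∉ D → 2 ≤ {u : V | G.Adj v u ∧ u ∈ D}.ncard) ∧
      (D.card : ℝ) ≤ Fintype.card V * p +
        Fintype.card V * ((1 - p) ^ (d + 1) + p * d * (1 - p) ^ d) := by
  set n := Fintype.card V with hn
  set q := 1 - p with hq
  have hpq : p + q = 1 := by rw [hq]; ring
  have hq0 : 0 ≤ q := by rw [hq]; linarith
  have hset : ∀ (S : Finset V) (v : V),
      {u : V | G.Adj v u ∧ u ∈ S}.ncard = (G.neighborFinset v ∩ S).card := by
    intro S v
    rw [show {u : V | G.Adj v u ∧ u ∈ S} = ↑(G.neighborFinset v ∩ S) by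
      ext u; simp [SimpleGraph.mem_neighborFinset]]
    exact Set.ncard_coe_finset _
  have hfailset : ∀ S : Finset V,
      {v : V | v ∉ S ∧ {u : V | G.Adj v u ∧ u ∈ S}.ncard < 2}.ncard
      = (univ.filter (fun v : V => v ∉ S ∧ (G.neighborFinset v ∩ S).card < 2)).card := by
    intro S
    rw [show {v : V | v ∉ S ∧ {u : V | G.Adj v u ∧ u ∈ S}.ncard < 2}
        = ↑(univ.filter (fun v : V => v ∉ S ∧ (G.neighborFinset v ∩ S).card < 2)) by
      ext v; simp [hset]]
    exact Set.ncard_coe_finset _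
  have hswap : (∑ S : Finset V, p ^ S.card * q ^ (n - S.card) *
        ((univ.filter (fun v : V => v ∉ S ∧ (G.neighborFinset v ∩ S).card < 2)).card : ℝ))
      = ∑ v : V, (q ^ (G.degree v + 1) + (G.degree v : ℝ) * p * q ^ (G.degree v)) := by
    have h1 : ∀ S : Finset V, p ^ S.card * q ^ (n - S.card) *
        ((univ.filter (fun v : V => v ∉ S ∧ (G.neighborFinset v ∩ S).card < 2)).card : ℝ)
        = ∑ v : V, if v ∉ S ∧ (G.neighborFinset v ∩ S).card < 2
            then p ^ S.card * q ^ (n - S.card) else 0 := by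
      intro S
      rw [Finset.card_filter]
      push_cast
      rw [Finset.mul_sum]
      exact Finset.sum_congr rfl fun v _ => by split <;> simp
    rw [Finset.sum_congr rfl fun S _ => h1 S, Finset.sum_comm]
    refine Finset.sum_congr rfl fun v _ => ?_
    rw [← Finset.sum_filter]
    exact sum_w_fail p q hpq G v
  have hvb : ∀ v : V, q ^ (G.degree v + 1) + (G.degree v : ℝ) * p * q ^ (G.degree v)
      ≤ q ^ (d + 1) + (d : ℝ) * p * q ^ d :=
    fun v => fmono p q hp0 hq0 hpq (G.degree v) d (hmin v)
  have hqd : (0:ℝ) ≤ p * q ^ d := mul_nonneg hp0 (pow_nonneg hq0 d)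
  have hn0 : (0:ℝ) ≤ (n : ℝ) := Nat.cast_nonneg n
  have hmain : (∑ S : Finset V, p ^ S.card * q ^ (n - S.card) *
        ((univ.filter (fun v : V => v ∉ S ∧ (G.neighborFinset v ∩ S).card < 2)).card : ℝ))
      ≤ n * (q ^ (d + 1) + (d : ℝ) * p * q ^ d) := by
    rw [hswap]
    calc ∑ v : V, (q ^ (G.degree v + 1) + (G.degree v : ℝ) * p * q ^ (G.degree v))
        ≤ ∑ _v : V, (q ^ (d + 1) + (d : ℝ) * p * q ^ d) :=
          Finset.sum_le_sum fun v _ => hvb v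
      _ = n * (q ^ (d + 1) + (d : ℝ) * p * q ^ d) := by
          rw [Finset.sum_const, Finset.card_univ, ← hn, nsmul_eq_mul]
  constructor
  · simp only [hfailset]
    calc (∑ S : Finset V, p ^ S.card * q ^ (n - S.card) *
          ((univ.filter (fun v : V => v ∉ S ∧ (G.neighborFinset v ∩ S).card < 2)).card : ℝ))
        ≤ n * (q ^ (d + 1) + (d : ℝ) * p * q ^ d) := hmain
      _ ≤ n * (q ^ (d + 1) + p * ((d : ℝ) + 1) * q ^ d) := by nlinarith [mul_nonneg hn0 hqd]
  · have hw0 : ∀ S : Finset V, 0 ≤ p ^ S.card * q ^ (n - S.card) :=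
      fun S => mul_nonneg (pow_nonneg hp0 _) (pow_nonneg hq0 _)
    have hw1 : ∑ S : Finset V, p ^ S.card * q ^ (n - S.card) = 1 := by
      have h := sum_w_powerset p q hpq (univ : Finset V)
      rwa [Finset.powerset_univ, Finset.card_univ, ← hn] at h
    have hEcard : ∑ S : Finset V, p ^ S.card * q ^ (n - S.card) * (S.card : ℝ) = n * p := by
      have h1 : ∀ S : Finset V, p ^ S.card * q ^ (n - S.card) * (S.card : ℝ)
          = ∑ v : V, if v ∈ S then p ^ S.card * q ^ (n - S.card) else 0 := by
        intro S
        have h2 : (S.card : ℝ) = ∑ v : V, if v ∈ S then (1:ℝ) else 0 := by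
          rw [Finset.sum_ite_mem, Finset.univ_inter, Finset.sum_const, nsmul_eq_mul, mul_one]
        rw [h2, Finset.mul_sum]
        exact Finset.sum_congr rfl fun v _ => by split <;> simp
      rw [Finset.sum_congr rfl fun S _ => h1 S, Finset.sum_comm]
      have h3 : ∀ v : V, (∑ S : Finset V,
          if v ∈ S then p ^ S.card * q ^ (n - S.card) else 0) = p := by
        intro v
        rw [← Finset.sum_filter]
        have h4 : univ.filter (fun S : Finset V => v ∈ S)
            = univ.filter (fun S : Finset V => S ∩ {v} = {v}) := by
          apply Finset.filter_congr
          intro S _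
          constructor
          · intro h; ext x
            simp only [Finset.mem_inter, Finset.mem_singleton]
            exact ⟨fun hx => hx.2, fun hx => ⟨hx ▸ h, hx⟩⟩
          · intro h
            have hv2 : v ∈ S ∩ {v} := by rw [h]; exact Finset.mem_singleton_self v
            exact (Finset.mem_inter.mp hv2).1
        rw [h4, sum_w_fiber p q hpq {v} {v} (le_refl _)]
        simp
      rw [Finset.sum_congr rfl fun v _ => h3 v, Finset.sum_const, Finset.card_univ, ← hn,
        nsmul_eq_mul]
    have hEF : ∑ S : Finset V, p ^ S.card * q ^ (n - S.card) * ((S.card : ℝ) +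
        ((univ.filter (fun v : V => v ∉ S ∧ (G.neighborFinset v ∩ S).card < 2)).card : ℝ))
        ≤ n * p + n * (q ^ (d + 1) + (d : ℝ) * p * q ^ d) := by
      have h1 : ∀ S : Finset V, p ^ S.card * q ^ (n - S.card) * ((S.card : ℝ) +
          ((univ.filter (fun v : V => v ∉ S ∧ (G.neighborFinset v ∩ S).card < 2)).card : ℝ))
          = p ^ S.card * q ^ (n - S.card) * (S.card : ℝ) + p ^ S.card * q ^ (n - S.card) *
          ((univ.filter (fun v : V => v ∉ S ∧ (G.neighborFinset v ∩ S).card < 2)).card : ℝ) :=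
        fun S => by ring
      rw [Finset.sum_congr rfl fun S _ => h1 S, Finset.sum_add_distrib, hEcard]
      linarith [hmain]
    have hex : ∃ S : Finset V, (S.card : ℝ) +
        ((univ.filter (fun v : V => v ∉ S ∧ (G.neighborFinset v ∩ S).card < 2)).card : ℝ)
        ≤ n * p + n * (q ^ (d + 1) + (d : ℝ) * p * q ^ d) := by
      by_contra hcon
      push_neg at hcon
      obtain ⟨S₀, -, hS₀⟩ := Finset.exists_ne_zero_of_sum_ne_zero
        (by rw [hw1]; norm_num : ∑ S : Finset V, p ^ S.card * q ^ (n - S.card) ≠ 0)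
      have hlt : ∑ S : Finset V, p ^ S.card * q ^ (n - S.card) *
          (n * p + n * (q ^ (d + 1) + (d : ℝ) * p * q ^ d))
          < ∑ S : Finset V, p ^ S.card * q ^ (n - S.card) * ((S.card : ℝ) +
          ((univ.filter (fun v : V => v ∉ S ∧ (G.neighborFinset v ∩ S).card < 2)).card : ℝ)) := by
        apply Finset.sum_lt_sum
        · exact fun S _ => mul_le_mul_of_nonneg_left (le_of_lt (hcon S)) (hw0 S)
        · exact ⟨S₀, Finset.mem_univ _,
            mul_lt_mul_of_pos_left (hcon S₀) (lt_of_le_of_ne (hw0 S₀) (Ne.symm hS₀))⟩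
      rw [← Finset.sum_mul, hw1, one_mul] at hlt
      linarith [hEF]
    obtain ⟨S₀, hS₀⟩ := hex
    refine ⟨S₀ ∪ univ.filter (fun v : V => v ∉ S₀ ∧ (G.neighborFinset v ∩ S₀).card < 2), ?_, ?_⟩
    · intro v hv
      rw [hset]
      have hvS : v ∉ S₀ := fun h => hv (Finset.mem_union_left _ h)
      have hvf : ¬(v ∉ S₀ ∧ (G.neighborFinset v ∩ S₀).card < 2) := fun h =>
        hv (Finset.mem_union_right _ (Finset.mem_filter.mpr ⟨Finset.mem_univ _, h⟩))
      have h2 : 2 ≤ (G.neighborFinset v ∩ S₀).card := by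
        by_contra h; exact hvf ⟨hvS, by omega⟩
      exact le_trans h2 (Finset.card_le_card
        (Finset.inter_subset_inter Finset.Subset.rfl Finset.subset_union_left))
    · calc ((S₀ ∪ univ.filter (fun v : V => v ∉ S₀ ∧ (G.neighborFinset v ∩ S₀).card < 2)).card : ℝ)
          ≤ (S₀.card : ℝ) +
            ((univ.filter (fun v : V => v ∉ S₀ ∧ (G.neighborFinset v ∩ S₀).card < 2)).card : ℝ) := by
            exact_mod_cast Finset.card_union_le _ _
        _ ≤ n * p + n * (q ^ (d + 1) + (d : ℝ) * p * q ^ d) := hS₀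
        _ = n * p + n * (q ^ (d + 1) + p * (d : ℝ) * q ^ d) := by ring
end
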